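/- (Pure peer-to-peer, graph level.) Let P1 and P2 be disjoint sets of vertices with c1 ∈ P1 and c2 ∈ P2, let S = S(P1, P2, c1, c2) be the binary star graph, and let w ∈ P2 \ {c2}. Let G' = S − (P2 \ {c2, w}) be obtained by deleting all vertices of P2 other than c2 and w. Then τ_{c2}(τ_{c1}(G') − c1) − c2 is the complete graph on (P1 \ {c1}) ∪ {w}. -/

import Mathlib

open SimpleGraph

universe u

/-- Local complementation of `G` at vertex `i`: adjacency is toggled exactly among
pairs of neighbors of `i`. -/
def localComp {V : Type u} (G : SimpleGraph V) (i : V) : SimpleGraph V where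
  Adj a b := a ≠ b ∧
    ((G.Adj i a ∧ G.Adj i b) ∧ ¬ G.Adj a b ∨ ¬(G.Adj i a ∧ G.Adj i b) ∧ G.Adj a b)
  symm := by
    constructor
    rintro a b ⟨hne, h⟩
    refine ⟨hne.symm, ?_⟩
    rcases h with ⟨⟨ha, hb⟩, hab⟩ | ⟨h1, h2⟩
    · exact Or.inl ⟨⟨hb, ha⟩, fun h => hab h.symm⟩
    · exact Or.inr ⟨fun h => h1 ⟨h.2, h.1⟩, h2.symm⟩
  loopless := ⟨fun a h => h.1 rfl⟩

/-- Vertex deletion `G − i`: remove every edge incident to `i` (the vertex stays,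
isolated). -/
def delVert {V : Type u} (G : SimpleGraph V) (i : V) : SimpleGraph V where
  Adj a b := G.Adj a b ∧ a ≠ i ∧ b ≠ i
  symm := ⟨fun _ _ ⟨h, ha, hb⟩ => ⟨h.symm, hb, ha⟩⟩
  loopless := ⟨fun a h => h.1.ne rfl⟩

/-- Deletion of a set `Z` of vertices: remove every edge incident to a vertex of `Z`. -/
def delSet {V : Type u} (G : SimpleGraph V) (Z : Set V) : SimpleGraph V where
  Adj a b := G.Adj a b ∧ a ∉ Z ∧ b ∉ Z
  symm := ⟨fun _ _ ⟨h, ha, hb⟩ => ⟨h.symm, hb, ha⟩⟩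
  loopless := ⟨fun a h => h.1.ne rfl⟩

/-- Star graph on the set `W` with center `c`: edges are exactly the pairs `{c, u}`
for `u ∈ W \ {c}`. -/
def starGraph {V : Type u} (W : Set V) (c : V) : SimpleGraph V :=
  SimpleGraph.fromRel (fun a b => a = c ∧ b ∈ W \ {c})

/-- Complete graph on the set `A`: edges are exactly all pairs of distinct elements
of `A`. -/
def completeOn {V : Type u} (A : Set V) : SimpleGraph V :=
  SimpleGraph.fromRel (fun a b => a ∈ A ∧ b ∈ A)

/-- Complete bipartite graph on parts `A` and `B`: edges are exactly the pairs
`{a, b}` with `a ∈ A` and `b ∈ B`. -/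
def completeBipartiteOn {V : Type u} (A B : Set V) : SimpleGraph V :=
  SimpleGraph.fromRel (fun a b => a ∈ A ∧ b ∈ B)

/-- Binary star graph `S(P1, P2, c1, c2)`: edges are exactly the pairs `{c1, u}`
with `u ∈ P2` together with the pairs `{u, c2}` with `u ∈ P1`. -/
def binaryStar {V : Type u} (P1 P2 : Set V) (c1 c2 : V) : SimpleGraph V :=
  SimpleGraph.fromRel (fun a b => (a = c1 ∧ b ∈ P2) ∨ (a ∈ P1 ∧ b = c2))

/-- The graph with the single edge `{c1, c2}`. -/
def singleEdge {V : Type u} (c1 c2 : V) : SimpleGraph V :=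
  SimpleGraph.fromRel (fun a b => a = c1 ∧ b = c2)


lemma step3 {V : Type u} (A : Set V) (c : V) (hc : c ∉ A) :
    delVert (localComp (starGraph A c) c) c = completeOn A := by
  ext a b
  simp only [delVert, localComp, _root_.starGraph, completeOn, SimpleGraph.fromRel_adj,
    Set.mem_diff, Set.mem_singleton_iff, ne_eq]
  constructor
  · rintro ⟨⟨hab, h⟩, ha, hb⟩
    refine ⟨hab, ?_⟩
    rcases h with ⟨⟨ha', hb'⟩, -⟩ | ⟨-, -, h⟩
    · exact Or.inl ⟨(by tauto), (by tauto)⟩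
    · tauto
  · rintro ⟨hab, hA⟩
    have haA : a ∈ A := by tauto
    have hbA : b ∈ A := by tauto
    have ha : a ≠ c := fun h => hc (h ▸ haA)
    have hb : b ≠ c := fun h => hc (h ▸ hbA)
    refine ⟨⟨hab, Or.inl ⟨⟨⟨by tauto, by tauto⟩, by tauto, by tauto⟩, ?_⟩⟩, ha, hb⟩
    rintro ⟨-, (⟨h, -⟩ | ⟨h, -⟩)⟩
    · exact ha h
    · exact hb h

lemma step1 {V : Type u} (P1 P2 : Set V) (c1 c2 w : V)
    (hc1P2 : c1 ∉ P2) (hc2 : c2 ∈ P2) (hw : w ∈ P2) (hc2P1 : c2 ∉ P1)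
    (hd : ∀ x ∈ P1, x ∉ P2) :
    delSet (binaryStar P1 P2 c1 c2) (P2 \ {c2, w}) =
      binaryStar P1 {c2, w} c1 c2 := by
  ext a b
  simp only [delSet, binaryStar, SimpleGraph.fromRel_adj, Set.mem_diff,
    Set.mem_insert_iff, Set.mem_singleton_iff, ne_eq]
  constructor
  · rintro ⟨⟨hab, h⟩, ha, hb⟩
    refine ⟨hab, ?_⟩
    rcases h with (⟨rfl, hbP2⟩ | ⟨haP1, rfl⟩) | (⟨rfl, haP2⟩ | ⟨hbP1, rfl⟩) <;> tauto
  · rintro ⟨hab, h⟩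
    have key : ∀ x : V, (x = c1 ∨ x ∈ P1 ∨ x = c2 ∨ x = w) →
        ¬(x ∈ P2 ∧ ¬(x = c2 ∨ x = w)) := by
      rintro x hx ⟨hxP2, hx2⟩
      rcases hx with rfl | hx | rfl | rfl
      · exact hc1P2 hxP2
      · exact hd x hx hxP2
      · exact hx2 (Or.inl rfl)
      · exact hx2 (Or.inr rfl)
    rcases h with (⟨rfl, hb2⟩ | ⟨haP1, rfl⟩) | (⟨rfl, ha2⟩ | ⟨hbP1, rfl⟩)
    · exact ⟨⟨hab, Or.inl (Or.inl ⟨rfl, by rcases hb2 with rfl | rfl; exacts [hc2, hw]⟩)⟩,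
        key _ (Or.inl rfl), key _ (by tauto)⟩
    · exact ⟨⟨hab, Or.inl (Or.inr ⟨haP1, rfl⟩)⟩, key _ (by tauto), key _ (by tauto)⟩
    · exact ⟨⟨hab, Or.inr (Or.inl ⟨rfl, by rcases ha2 with rfl | rfl; exacts [hc2, hw]⟩)⟩,
        key _ (by tauto), key _ (Or.inl rfl)⟩
    · exact ⟨⟨hab, Or.inr (Or.inr ⟨hbP1, rfl⟩)⟩, key _ (by tauto), key _ (by tauto)⟩

set_option maxHeartbeats 1000000 in
lemma step2 {V : Type u} (P1 : Set V) (c1 c2 w : V)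
    (hc1 : c1 ∈ P1) (hc2P1 : c2 ∉ P1) (hwP1 : w ∉ P1) (hwc2 : w ≠ c2)
    (hc1c2 : c1 ≠ c2) (hwc1 : w ≠ c1) :
    delVert (localComp (binaryStar P1 {c2, w} c1 c2) c1) c1 =
      starGraph ((P1 \ {c1}) ∪ {w}) c2 := by
  have nbr : ∀ x : V, (binaryStar P1 {c2, w} c1 c2).Adj c1 x ↔ (x = c2 ∨ x = w) := by
    intro x
    simp only [binaryStar, SimpleGraph.fromRel_adj, Set.mem_insert_iff,
      Set.mem_singleton_iff, ne_eq]
    constructor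
    · rintro ⟨h, (⟨-, hx⟩ | ⟨-, rfl⟩) | (⟨rfl, -⟩ | ⟨hx, rfl⟩)⟩ <;> tauto
    · rintro (rfl | rfl)
      · refine ⟨hc1c2, Or.inl (Or.inl ?_)⟩; simp
      · refine ⟨fun h => hwc1 h.symm, Or.inl (Or.inl ?_)⟩; simp
  ext a b
  simp only [delVert, localComp, _root_.starGraph, SimpleGraph.fromRel_adj, nbr,
    Set.mem_diff, Set.mem_union, Set.mem_singleton_iff, ne_eq]
  simp only [binaryStar, SimpleGraph.fromRel_adj, Set.mem_insert_iff,
    Set.mem_singleton_iff, ne_eq]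
  by_cases h1 : a = c1 <;> by_cases h2 : b = c1 <;> by_cases h3 : a = c2 <;>
    by_cases h4 : b = c2 <;> by_cases h5 : a = w <;> by_cases h6 : b = w <;>
    by_cases h7 : a ∈ P1 <;> by_cases h8 : b ∈ P1 <;>
    subst_vars <;> simp_all <;> tauto

/-- Pure peer-to-peer, graph level:
with `G' = S − (P2 \ {c2, w})`, `τ_{c2}(τ_{c1}(G') − c1) − c2` is the complete graph
on `(P1 \ {c1}) ∪ {w}`. -/
theorem stmt_10 {V : Type u} (P1 P2 : Set V) (hdisj : Disjoint P1 P2)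
    (c1 c2 : V) (hc1 : c1 ∈ P1) (hc2 : c2 ∈ P2) (w : V) (hw : w ∈ P2 \ {c2}) :
    delVert (localComp (delVert (localComp
        (delSet (binaryStar P1 P2 c1 c2) (P2 \ {c2, w})) c1) c1) c2) c2 =
      completeOn ((P1 \ {c1}) ∪ {w}) := by
  have hc1P2 : c1 ∉ P2 := fun h => (hdisj.ne_of_mem hc1 h) rfl
  have hwP1 : w ∉ P1 := fun h => (hdisj.ne_of_mem h hw.1) rfl
  have hc2P1 : c2 ∉ P1 := fun h => (hdisj.ne_of_mem h hc2) rfl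
  have hwc2 : w ≠ c2 := hw.2
  have hc1c2 : c1 ≠ c2 := fun h => hc1P2 (h ▸ hc2)
  have hwc1 : w ≠ c1 := fun h => hwP1 (h ▸ hc1)
  rw [step1 P1 P2 c1 c2 w hc1P2 hc2 hw.1 hc2P1 (fun x hx hx2 => (hdisj.ne_of_mem hx hx2) rfl),
    step2 P1 c1 c2 w hc1 hc2P1 hwP1 hwc2 hc1c2 hwc1,
    step3 _ c2 (by
      rintro (⟨h, -⟩ | h)
      · exact hc2P1 h
      · exact hwc2 ((Set.mem_singleton_iff.mp h).symm))]
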